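/- Let M be a finite subset of a countable group G, let V be a vector space over a field k, and let S = L(V^M, V). Given s, t ∈ S^G, define p with coefficients p(g,k) = Σ_{h∈G} s(g,h) ∘ t(g·h, h⁻¹k) ∈ End_k(V) for g, k ∈ G (a finite sum, nonzero only for k ∈ M·M). Then σ_p = σ_s ∘ σ_t, and for the dual NUCA one has σ_{p*} = σ_{t*} ∘ σ_{s*} as maps (V*)^G → (V*)^G; that is, (σ_s ∘ σ_t)* = σ_{t*} ∘ σ_{s*}. -/
import Mathlib


open scoped BigOperators Pointwise

/-- The linear NUCA `σ_s : V^G → V^G` with memory `M ⊆ G` associated with the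
configuration of local defining maps `s`, given in coefficient form:
`σ_s(x)(g) = ∑_{m ∈ M} s(g,m)(x(g·m))`. -/
def nucaMap {k V G : Type*} [Field k] [AddCommGroup V] [Module k V] [Group G]
    (M : Finset G) (s : G → G → (V →ₗ[k] V)) (x : G → V) : G → V :=
  fun g => ∑ m ∈ M, s g m (x (g * m))

/-- The dual configuration `s*` of local defining maps, in coefficient form:
`s*(g,m) = (s(g·m, m⁻¹))ᵀ`, the transpose (dual map) of `s(g·m, m⁻¹)`. -/
def dualCoeff {k V G : Type*} [Field k] [AddCommGroup V] [Module k V] [Group G]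
    (s : G → G → (V →ₗ[k] V)) :
    G → G → (Module.Dual k V →ₗ[k] Module.Dual k V) :=
  fun g m => (s (g * m) m⁻¹).dualMap

/-- The coefficients of the composition `σ_s ∘ σ_t`:
`p(g,k) = ∑_{h ∈ M} s(g,h) ∘ t(g·h, h⁻¹k)` (the sum over all `h ∈ G` reduces to this
finite sum since `s(g,h) = 0` for `h ∉ M`). -/
def compCoeff {k V G : Type*} [Field k] [AddCommGroup V] [Module k V] [Group G]
    (M : Finset G) (s t : G → G → (V →ₗ[k] V)) : G → G → (V →ₗ[k] V) :=
  fun g kk => ∑ h ∈ M, (s g h) ∘ₗ (t (g * h) (h⁻¹ * kk))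

lemma dualMap_sum {k V : Type*} [Field k] [AddCommGroup V] [Module k V]
    {ι : Type*} (A : Finset ι) (F : ι → (V →ₗ[k] V)) :
    (∑ i ∈ A, F i).dualMap = ∑ i ∈ A, (F i).dualMap := by
  ext φ v
  simp

/-- `σ_p = σ_s ∘ σ_t` (with memory `M·M`), and for duals
`(σ_s ∘ σ_t)* = σ_{p*} = σ_{t*} ∘ σ_{s*}`. -/
theorem stmt6 {k V G : Type*} [Field k] [AddCommGroup V] [Module k V] [Group G]
    [DecidableEq G]
    (M : Finset G) (s t : G → G → (V →ₗ[k] V))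
    (hs : ∀ g, ∀ m ∉ M, s g m = 0) (ht : ∀ g, ∀ m ∉ M, t g m = 0) :
    nucaMap (M * M) (compCoeff M s t) = (nucaMap M s) ∘ (nucaMap M t) ∧
    nucaMap (M * M)⁻¹ (dualCoeff (compCoeff M s t)) =
      (nucaMap M⁻¹ (dualCoeff t)) ∘ (nucaMap M⁻¹ (dualCoeff s)) := by
  constructor
  · funext x g
    simp only [nucaMap, compCoeff, Function.comp_apply, LinearMap.sum_apply,
      LinearMap.comp_apply, map_sum]
    rw [Finset.sum_comm]
    refine Finset.sum_congr rfl fun h hh => ?_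
    have hsub : M.image (h * ·) ⊆ M * M := by
      intro m hm
      obtain ⟨m', hm', rfl⟩ := Finset.mem_image.1 hm
      exact Finset.mul_mem_mul hh hm'
    rw [← Finset.sum_subset hsub, Finset.sum_image (fun a _ b _ hab =>
      mul_left_cancel hab)]
    · refine Finset.sum_congr rfl fun m' hm' => ?_
      rw [inv_mul_cancel_left, mul_assoc]
    · intro m hm hnot
      have : h⁻¹ * m ∉ M := by
        intro hmem
        exact hnot (Finset.mem_image.2 ⟨h⁻¹ * m, hmem, by group⟩)
      rw [ht _ _ this]
      simp
  · funext ω g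
    simp only [nucaMap, compCoeff, dualCoeff, Function.comp_apply, dualMap_sum,
      LinearMap.sum_apply, map_sum]
    -- turn both sides into sums over product finsets
    rw [← Finset.sum_product', ← Finset.sum_product']
    have hsub : (M⁻¹ ×ˢ M⁻¹).image (fun p : G × G => (p.1 * p.2, p.2⁻¹)) ⊆
        (M*M)⁻¹ ×ˢ M := by
      intro q hq
      obtain ⟨⟨a, b⟩, hab, rfl⟩ := Finset.mem_image.1 hq
      obtain ⟨ha, hb⟩ := Finset.mem_product.1 hab
      refine Finset.mem_product.2 ⟨?_, ?_⟩
      · rw [mul_inv_rev]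
        exact Finset.mul_mem_mul ha hb
      · simpa using hb
    rw [← Finset.sum_subset hsub, Finset.sum_image]
    · refine Finset.sum_congr rfl fun p hp => ?_
      obtain ⟨a, b⟩ := p
      have : a * b * b⁻¹ = a := by group
      have h2 : b * (a * b)⁻¹ = a⁻¹ := by group
      have h3 : (b⁻¹)⁻¹ * (a*b)⁻¹ = a⁻¹ := by group
      ext v
      simp [this, h3, mul_assoc]
    · rintro ⟨a, b⟩ _ ⟨c, d⟩ _ h
      simp only [Prod.mk.injEq, inv_inj] at h
      obtain ⟨h1, rfl⟩ := h
      exact Prod.ext (mul_right_cancel h1) rfl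
    · rintro ⟨m, h⟩ hmem hnot
      obtain ⟨hm, hh⟩ := Finset.mem_product.1 hmem
      have : h⁻¹ * m⁻¹ ∉ M := by
        intro hc
        refine hnot (Finset.mem_image.2 ⟨(m * h, h⁻¹), ?_, by simp⟩)
        refine Finset.mem_product.2 ⟨?_, by simpa using hh⟩
        have : (m * h)⁻¹ = h⁻¹ * m⁻¹ := by group
        rw [Finset.mem_inv']
        rw [this]; exact hc
      rw [ht _ _ this]
      have hz : (0 : V →ₗ[k] V).dualMap = (0 : Module.Dual k V →ₗ[k] Module.Dual k V) := by
        ext φ v; simp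
      rw [LinearMap.comp_zero, hz]; simp
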